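/- For every n with 1 ≤ n ≤ N, the ratio V_n(x)/(c_n·x) tends to 1 as x → ∞. -/

import Mathlib

open MeasureTheory Set Filter

/-- For every `1 ≤ n ≤ N`, the ratio `V n x / (c n * x)` tends to `1` as `x → ∞`. -/
theorem value_function_ratio_tendsto_one
    (N : ℕ) (hN : 2 ≤ N) (τ : ℝ) (hτ : 0 < τ)
    (μ : Measure ℝ) [IsProbabilityMeasure μ]
    (hsupp : μ {x : ℝ | x < 0} = 0) (hmean : Integrable id μ)
    (c : ℕ → ℝ) (hc : ∀ n : ℕ, c n = 1 / (1 + (n : ℝ) * τ))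
    (V : ℕ → ℝ → ℝ)
    (hVN : ∀ x : ℝ, 0 ≤ x → V N x = c N * x)
    (hVn : ∀ n : ℕ, 1 ≤ n → n ≤ N - 1 → ∀ x : ℝ, 0 ≤ x →
      V n x = max (c n * x) (∫ y, V (n + 1) (max x y) ∂μ)) :
    ∀ n : ℕ, 1 ≤ n → n ≤ N →
      Tendsto (fun x : ℝ => V n x / (c n * x)) atTop (nhds 1) := by
  have hc_pos : ∀ m : ℕ, 0 < c m := by
    intro m; rw [hc]
    have : (0:ℝ) ≤ (m:ℝ) * τ := by positivity
    positivity
  have hc_le_one : ∀ m : ℕ, c m ≤ 1 := by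
    intro m; rw [hc]
    rw [div_le_one (by positivity)]
    nlinarith [Nat.cast_nonneg (α := ℝ) m]
  have hc_mono : ∀ m : ℕ, c (m + 1) ≤ c m := by
    intro m; rw [hc, hc]
    apply one_div_le_one_div_of_le (by positivity)
    push_cast
    nlinarith [Nat.cast_nonneg (α := ℝ) m]
  set M : ℝ := ∫ y, max 0 y ∂μ with hM
  have hmax : Integrable (fun y : ℝ => max 0 y) μ := by
    exact (hmean.sup (integrable_const (0:ℝ))).congr (Eventually.of_forall fun y => max_comm y 0)
  have hM0 : 0 ≤ M := integral_nonneg fun y => le_max_left 0 y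
  -- key bounds by downward induction
  have key : ∀ k n : ℕ, n + k = N → 1 ≤ n → ∀ x : ℝ, 0 ≤ x →
      c n * x ≤ V n x ∧ V n x ≤ c n * x + (k : ℝ) * M := by
    intro k
    induction k with
    | zero =>
      intro n hnk hn1 x hx
      have hnN : n = N := by omega
      subst hnN
      rw [hVN x hx]
      constructor
      · exact le_refl _
      · simp
    | succ k ih =>
      intro n hnk hn1 x hx
      have hnN : n ≤ N - 1 := by omega
      have hrec := hVn n hn1 hnN x hx
      have ihx : ∀ y : ℝ, c (n+1) * max x y ≤ V (n+1) (max x y) ∧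
          V (n+1) (max x y) ≤ c (n+1) * max x y + (k : ℝ) * M := by
        intro y
        exact ih (n+1) (by omega) (by omega) (max x y) (le_trans hx (le_max_left x y))
      refine ⟨hrec ▸ le_max_left _ _, ?_⟩
      rw [hrec]
      -- bound the integral
      have hgle : ∀ y : ℝ, V (n+1) (max x y) ≤ c n * x + (k : ℝ) * M + max 0 y := by
        intro y
        have h2 := (ihx y).2
        have h1 : max x y ≤ x + max 0 y := by
          apply max_le
          · nlinarith [le_max_left 0 y]
          · nlinarith [le_max_right 0 y]
        have h3 : c (n+1) * max x y ≤ c (n+1) * (x + max 0 y) :=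
          mul_le_mul_of_nonneg_left h1 (hc_pos (n+1)).le
        nlinarith [hc_mono n, hc_le_one (n+1), hc_pos (n+1), le_max_left 0 y]
      have hnonneg : ∀ y : ℝ, 0 ≤ V (n+1) (max x y) := by
        intro y
        have := (ihx y).1
        have h0 : 0 ≤ c (n+1) * max x y :=
          mul_nonneg (hc_pos (n+1)).le (le_trans hx (le_max_left x y))
        linarith
      have hInt : Integrable (fun y : ℝ => c n * x + (k : ℝ) * M + max 0 y) μ :=
        (integrable_const _).add hmax
      have hle : ∫ y, V (n+1) (max x y) ∂μ ≤ ∫ y, (c n * x + (k : ℝ) * M + max 0 y) ∂μ :=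
        integral_mono_of_nonneg (Eventually.of_forall hnonneg) hInt
          (Eventually.of_forall hgle)
      have hEq : ∫ y, (c n * x + (k : ℝ) * M + max 0 y) ∂μ
          = c n * x + (k : ℝ) * M + M := by
        rw [integral_add (integrable_const _) hmax]
        simp [hM]
      apply max_le
      · push_cast; nlinarith
      · rw [hEq] at hle
        push_cast
        linarith
  -- conclusion
  intro n hn1 hnN
  set K : ℝ := ((N - n : ℕ) : ℝ) * M with hK
  have hK0 : 0 ≤ K := mul_nonneg (Nat.cast_nonneg _) hM0
  have hb := key (N - n) n (by omega) hn1
  have hcxpos : ∀ x : ℝ, 0 < x → 0 < c n * x := fun x hx => mul_pos (hc_pos n) hx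
  have htop : Tendsto (fun x : ℝ => 1 + K / (c n * x)) atTop (nhds 1) := by
    have h1 : Tendsto (fun x : ℝ => c n * x) atTop atTop :=
      tendsto_id.const_mul_atTop (hc_pos n)
    have h0 : Tendsto (fun x : ℝ => K / (c n * x)) atTop (nhds 0) :=
      tendsto_const_nhds.div_atTop h1
    simpa using tendsto_const_nhds.add h0
  refine tendsto_of_tendsto_of_tendsto_of_le_of_le' tendsto_const_nhds htop ?_ ?_
  · filter_upwards [eventually_gt_atTop (0:ℝ)] with x hx
    have hcx := hcxpos x hx
    rw [le_div_iff₀ hcx]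
    have := (hb x hx.le).1
    linarith
  · filter_upwards [eventually_gt_atTop (0:ℝ)] with x hx
    have hcx := hcxpos x hx
    rw [div_le_iff₀ hcx]
    have h2 := (hb x hx.le).2
    have hEq : (1 + K / (c n * x)) * (c n * x) = c n * x + K := by
      rw [add_mul, div_mul_cancel₀ _ hcx.ne', one_mul]
    rw [hEq]
    linarith
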